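/- If m is a state of a group G, then for all g, h ∈ G, |m(g) - m(h)| ≤ √(2 · Re(1 - m(g⁻¹h))) (Kreĭn's inequality). -/

import Mathlib

open scoped ComplexConjugate ComplexOrder

private lemma key_pos {G : Type*} [Group G] (m : G → ℂ)
    (hpos : ∀ c : G →₀ ℂ,
      0 ≤ ∑ g ∈ c.support, ∑ h ∈ c.support, conj (c g) * c h * m (g⁻¹ * h))
    (s : Finset G) (f : G → ℂ) (hf : ∀ a, f a ≠ 0 → a ∈ s) :
    0 ≤ ∑ x ∈ s, ∑ y ∈ s, conj (f x) * f y * m (x⁻¹ * y) := by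
  have h := hpos (Finsupp.onFinset s f hf)
  simp only [Finsupp.onFinset_apply] at h
  have hsub : (Finsupp.onFinset s f hf).support ⊆ s := Finsupp.support_onFinset_subset
  have e1 : ∀ x, ∑ y ∈ (Finsupp.onFinset s f hf).support, conj (f x) * f y * m (x⁻¹ * y)
      = ∑ y ∈ s, conj (f x) * f y * m (x⁻¹ * y) := by
    intro x
    refine Finset.sum_subset hsub fun y _ hy => ?_
    have : f y = 0 := by
      have := Finsupp.notMem_support_iff.mp hy
      simpa using this
    simp [this]
  rw [Finset.sum_congr rfl (fun x _ => e1 x)] at h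
  rwa [Finset.sum_subset hsub (fun x _ hx => ?_)] at h
  have : f x = 0 := by
    have := Finsupp.notMem_support_iff.mp hx
    simpa using this
  simp [this]

private lemma tuple_pos {G : Type*} [Group G] (m : G → ℂ)
    (hpos : ∀ c : G →₀ ℂ,
      0 ≤ ∑ g ∈ c.support, ∑ h ∈ c.support, conj (c g) * c h * m (g⁻¹ * h))
    {n : ℕ} (p : Fin n → G) (v : Fin n → ℂ) :
    0 ≤ ∑ i, ∑ j, conj (v i) * v j * m ((p i)⁻¹ * p j) := by
  classical
  set s : Finset G := Finset.image p Finset.univ with hs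
  set f : G → ℂ := fun x => ∑ i ∈ Finset.univ.filter (fun i => p i = x), v i with hfdef
  have hf : ∀ a, f a ≠ 0 → a ∈ s := by
    intro a ha
    by_contra hm
    apply ha
    have hemp : Finset.univ.filter (fun i => p i = a) = ∅ := by
      ext i
      simp only [Finset.mem_filter, Finset.mem_univ, true_and, Finset.notMem_empty,
        iff_false]
      intro hpi
      exact hm (by simp [hs, ← hpi])
    simp [hfdef, hemp]
  have h := key_pos m hpos s f hf
  have key : ∑ x ∈ s, ∑ y ∈ s, conj (f x) * f y * m (x⁻¹ * y)
      = ∑ i, ∑ j, conj (v i) * v j * m ((p i)⁻¹ * p j) := by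
    have step1 : ∀ x ∈ s, ∀ y ∈ s, conj (f x) * f y * m (x⁻¹ * y)
        = ∑ i ∈ Finset.univ.filter (fun i => p i = x),
            ∑ j ∈ Finset.univ.filter (fun j => p j = y),
              conj (v i) * v j * m ((p i)⁻¹ * p j) := by
      intro x _ y _
      rw [hfdef]
      simp only [map_sum]
      rw [Finset.sum_mul, Finset.sum_mul]
      refine Finset.sum_congr rfl fun i hi => ?_
      rw [Finset.mul_sum, Finset.sum_mul]
      refine Finset.sum_congr rfl fun j hj => ?_
      have hix : p i = x := (Finset.mem_filter.mp hi).2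
      have hjy : p j = y := (Finset.mem_filter.mp hj).2
      rw [hix, hjy]
    calc ∑ x ∈ s, ∑ y ∈ s, conj (f x) * f y * m (x⁻¹ * y)
        = ∑ x ∈ s, ∑ y ∈ s, ∑ i ∈ Finset.univ.filter (fun i => p i = x),
            ∑ j ∈ Finset.univ.filter (fun j => p j = y),
              conj (v i) * v j * m ((p i)⁻¹ * p j) :=
          Finset.sum_congr rfl fun x hx => Finset.sum_congr rfl fun y hy => step1 x hx y hy
      _ = ∑ x ∈ s, ∑ i ∈ Finset.univ.filter (fun i => p i = x),
            ∑ y ∈ s, ∑ j ∈ Finset.univ.filter (fun j => p j = y),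
              conj (v i) * v j * m ((p i)⁻¹ * p j) :=
          Finset.sum_congr rfl fun x _ => Finset.sum_comm
      _ = ∑ x ∈ s, ∑ i ∈ Finset.univ.filter (fun i => p i = x),
            ∑ j, conj (v i) * v j * m ((p i)⁻¹ * p j) := by
          refine Finset.sum_congr rfl fun x _ => Finset.sum_congr rfl fun i _ => ?_
          exact Finset.sum_fiberwise_of_maps_to (fun j _ => Finset.mem_image_of_mem p (Finset.mem_univ j)) _
      _ = ∑ i, ∑ j, conj (v i) * v j * m ((p i)⁻¹ * p j) :=
          Finset.sum_fiberwise_of_maps_to (fun i _ => Finset.mem_image_of_mem p (Finset.mem_univ i)) _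
  rwa [key] at h

theorem krein_inequality {G : Type*} [Group G] (m : G → ℂ)
    (hone : m 1 = 1)
    (hpos : ∀ c : G →₀ ℂ,
      0 ≤ ∑ g ∈ c.support, ∑ h ∈ c.support, conj (c g) * c h * m (g⁻¹ * h)) :
    ∀ g h : G, ‖m g - m h‖ ≤ Real.sqrt (2 * (1 - m (g⁻¹ * h)).re) := by
  have herm : ∀ g : G, m g⁻¹ = conj (m g) := by
    intro g
    have H : ∀ z : ℂ, 0 ≤ 1 + z * m g + conj z * m g⁻¹ + conj z * z := by
      intro z
      have h0 := tuple_pos m hpos ![1, g] ![1, z]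
      simp only [Fin.sum_univ_two, Matrix.cons_val_zero, Matrix.cons_val_one, Matrix.head_cons,
        inv_one, one_mul, mul_one, inv_mul_cancel, hone, map_one] at h0
      exact h0.trans_eq (by ring)
    have h1 := (Complex.le_def.mp (H 1)).2
    have h2 := (Complex.le_def.mp (H Complex.I)).2
    simp [Complex.add_im, Complex.mul_im, Complex.conj_im, Complex.conj_re,
      Complex.I_re, Complex.I_im] at h1 h2
    apply Complex.ext
    · simp only [Complex.conj_re]; linarith
    · simp only [Complex.conj_im]; linarith
  intro g h
  set a := m g with ha
  set b := m h with hb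
  set c := m (g⁻¹ * h) with hc
  set d := ‖a - b‖ with hd
  rcases eq_or_ne d 0 with hd0 | hd0
  · rw [hd0]; exact Real.sqrt_nonneg _
  have hdpos : 0 < d := lt_of_le_of_ne (norm_nonneg _) (Ne.symm hd0)
  set w : ℂ := -conj (a - b) / (d : ℂ) with hw
  have hdc : ((d : ℂ)) ≠ 0 := by exact_mod_cast hd0
  have hnorm : (a - b) * conj (a - b) = ((d : ℂ))^2 := by
    rw [Complex.mul_conj]
    norm_cast
    rw [hd, Complex.sq_norm]
  have hw1 : conj w * w = 1 := by
    rw [hw, map_div₀, map_neg, Complex.conj_conj, Complex.conj_ofReal, div_mul_div_comm,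
      neg_mul_neg, hnorm, sq]
    exact div_self (mul_ne_zero hdc hdc)
  have hw2 : w * (a - b) = -(d : ℂ) := by
    rw [hw, div_mul_eq_mul_div, neg_mul, mul_comm, hnorm, sq]
    field_simp
  have hw2c : conj w * (conj a - conj b) = -(d : ℂ) := by
    have := congrArg conj hw2
    simpa [map_mul, map_sub, map_neg, Complex.conj_ofReal] using this
  have hS := tuple_pos m hpos ![1, g, h] ![(d : ℂ), w, -w]
  rw [show ∑ i, ∑ j, conj ((![(d : ℂ), w, -w]) i) * (![(d : ℂ), w, -w]) j
        * m (((![1, g, h] : Fin 3 → G) i)⁻¹ * (![1, g, h] : Fin 3 → G) j)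
      = ((2 - d^2 - 2*c.re : ℝ) : ℂ) from ?_] at hS
  · have hre : (0 : ℝ) ≤ 2 - d^2 - 2*c.re := Complex.zero_le_real.mp hS
    have hgoal : d^2 ≤ 2 * (1 - c).re := by
      simp only [Complex.sub_re, Complex.one_re]
      linarith
    exact Real.le_sqrt_of_sq_le hgoal
  · have hhg : m (h⁻¹ * g) = conj c := by
      have : h⁻¹ * g = (g⁻¹ * h)⁻¹ := by group
      rw [this, herm, hc]
    simp only [Fin.sum_univ_three, Matrix.cons_val_zero, Matrix.cons_val_one, Matrix.head_cons,
      Matrix.cons_val_two, Matrix.tail_cons, inv_one, one_mul, mul_one, inv_mul_cancel,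
      hone, herm, hhg, ← ha, ← hb, ← hc, map_neg, map_one, Complex.conj_ofReal]
    have hcc : c + conj c = 2 * ((c.re : ℝ) : ℂ) := by
      rw [Complex.add_conj]; push_cast; ring
    push_cast
    linear_combination (d : ℂ) * hw2 + (d : ℂ) * hw2c + (2 - c - conj c) * hw1 - hcc
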